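/- Let a, d, n be positive integers with gcd(a, n) = 1 and n ≥ 2. Let ζ ∈ ℂ be a primitive n-th root of unity and ω ∈ ℂ a primitive (dn²)-th root of unity. Let A = ℂ[u,v,y]/(uv − y^{dn}) with the ℂ-algebra automorphism σ induced by u ↦ ζu, v ↦ ζ⁻¹v, y ↦ ζᵃy (well defined since uv − y^{dn} is sent to itself), and let B = ℂ[s,t] with the ℂ-algebra automorphism τ determined by s ↦ ωs, t ↦ ω^{dna−1}t. Then the fixed subalgebra of A under σ is isomorphic as a ℂ-algebra to the fixed subalgebra of B under τ. (That is, the central fiber of the Kollár–Shepherd-Barron ℚ-Gorenstein smoothing family is the cyclic quotient singularity of type 1/(dn²)(1, dna−1).) -/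

import Mathlib

open MvPolynomial

/-- The fixed subalgebra of a `ℂ`-algebra automorphism. -/
def fixedSubalgebra {R : Type*} [CommSemiring R] [Algebra ℂ R]
    (φ : R ≃ₐ[ℂ] R) : Subalgebra ℂ R :=
  AlgHom.equalizer (φ : R →ₐ[ℂ] R) (AlgHom.id ℂ R)

/-- `A = ℂ[u,v,y]/(uv − y^{dn})`, with `u = X 0`, `v = X 1`, `y = X 2`. -/
abbrev CentralFiberAlg (d n : ℕ) : Type :=
  MvPolynomial (Fin 3) ℂ ⧸
    Ideal.span ({X 0 * X 1 - X 2 ^ (d * n)} : Set (MvPolynomial (Fin 3) ℂ))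

noncomputable def phiKSB (d n : ℕ) : MvPolynomial (Fin 3) ℂ →ₐ[ℂ] MvPolynomial (Fin 2) ℂ :=
  aeval ![X 0 ^ (d * n), X 1 ^ (d * n), X 0 * X 1]

noncomputable def EmKSB (d n : ℕ) (e : Fin 3 →₀ ℕ) : Fin 2 →₀ ℕ :=
  Finsupp.single 0 (d * n * e 0 + e 2) + Finsupp.single 1 (d * n * e 1 + e 2)

lemma EmKSB_apply0 (d n : ℕ) (e : Fin 3 →₀ ℕ) : EmKSB d n e 0 = d * n * e 0 + e 2 := by
  simp [EmKSB, Finsupp.single_apply]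

lemma EmKSB_apply1 (d n : ℕ) (e : Fin 3 →₀ ℕ) : EmKSB d n e 1 = d * n * e 1 + e 2 := by
  simp [EmKSB, Finsupp.single_apply]

lemma fin2_decomp (e : Fin 2 →₀ ℕ) :
    e = Finsupp.single 0 (e 0) + Finsupp.single 1 (e 1) := by
  ext i; fin_cases i <;> simp [Finsupp.single_apply]

lemma fin3_decomp (e : Fin 3 →₀ ℕ) :
    e = Finsupp.single 0 (e 0) + (Finsupp.single 1 (e 1) + Finsupp.single 2 (e 2)) := by
  ext i; fin_cases i <;> simp [Finsupp.single_apply]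

lemma monomial2_eq (e : Fin 2 →₀ ℕ) (c : ℂ) :
    monomial e c = C c * X 0 ^ (e 0) * X 1 ^ (e 1) := by
  conv_lhs => rw [fin2_decomp e]
  rw [monomial_single_add]
  conv_lhs => rw [show (Finsupp.single (1 : Fin 2) (e 1)) = Finsupp.single 1 (e 1) + 0 from (add_zero _).symm]
  rw [monomial_single_add, monomial_zero']
  ring

lemma monomial3_eq (e : Fin 3 →₀ ℕ) (c : ℂ) :
    monomial e c = C c * X 0 ^ (e 0) * X 1 ^ (e 1) * X 2 ^ (e 2) := by
  conv_lhs => rw [fin3_decomp e]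
  rw [monomial_single_add, monomial_single_add]
  conv_lhs => rw [show (Finsupp.single (2 : Fin 3) (e 2)) = Finsupp.single 2 (e 2) + 0 from (add_zero _).symm]
  rw [monomial_single_add, monomial_zero']
  ring

lemma phiKSB_monomial (d n : ℕ) (e : Fin 3 →₀ ℕ) (c : ℂ) :
    phiKSB d n (monomial e c) = monomial (EmKSB d n e) c := by
  rw [phiKSB, aeval_monomial, Finsupp.prod_fintype _ _ (fun i => pow_zero _), Fin.prod_univ_three,
    monomial2_eq, EmKSB_apply0, EmKSB_apply1, MvPolynomial.algebraMap_eq]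
  simp only [Matrix.cons_val_zero, Matrix.cons_val_one, Matrix.head_cons, Matrix.cons_val_two,
    Matrix.tail_cons]
  ring

lemma diff_mem_aux (d n : ℕ) (hdn : 0 < d * n) (e e' : Fin 3 →₀ ℕ)
    (h0 : d * n * e 0 + e 2 = d * n * e' 0 + e' 2)
    (h1 : d * n * e 1 + e 2 = d * n * e' 1 + e' 2)
    (h2 : e 2 ≤ e' 2) (c : ℂ) :
    monomial e c - monomial e' c ∈
      Ideal.span ({X 0 * X 1 - X 2 ^ (d * n)} : Set (MvPolynomial (Fin 3) ℂ)) := by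
  have hle0 : e' 0 ≤ e 0 := Nat.le_of_mul_le_mul_left (by omega) hdn
  set δ := e 0 - e' 0 with hδ
  have he0 : e 0 = e' 0 + δ := by omega
  have he2 : e' 2 = e 2 + d * n * δ := by
    have h3 : d * n * e 0 = d * n * e' 0 + d * n * δ := by rw [he0, Nat.mul_add]
    omega
  have he1 : e 1 = e' 1 + δ := by
    have h4 : d * n * e 1 = d * n * (e' 1 + δ) := by rw [Nat.mul_add]; omega
    exact Nat.eq_of_mul_eq_mul_left hdn h4
  have hkey : monomial e c - monomial e' c =
      (C c * X 0 ^ e' 0 * X 1 ^ e' 1 * X 2 ^ e 2) * ((X 0 * X 1) ^ δ - (X 2 ^ (d * n)) ^ δ) := by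
    rw [monomial3_eq, monomial3_eq, he0, he1, he2]; ring
  rw [hkey]
  exact Ideal.mem_span_singleton.mpr ((sub_dvd_pow_sub_pow _ _ δ).mul_left _)

lemma diff_mem (d n : ℕ) (hdn : 0 < d * n) (e e' : Fin 3 →₀ ℕ)
    (h : EmKSB d n e = EmKSB d n e') (c : ℂ) :
    monomial e c - monomial e' c ∈
      Ideal.span ({X 0 * X 1 - X 2 ^ (d * n)} : Set (MvPolynomial (Fin 3) ℂ)) := by
  have h0 : d * n * e 0 + e 2 = d * n * e' 0 + e' 2 := by
    have := DFunLike.congr_fun h 0; rwa [EmKSB_apply0, EmKSB_apply0] at this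
  have h1 : d * n * e 1 + e 2 = d * n * e' 1 + e' 2 := by
    have := DFunLike.congr_fun h 1; rwa [EmKSB_apply1, EmKSB_apply1] at this
  rcases le_total (e 2) (e' 2) with h2 | h2
  · exact diff_mem_aux d n hdn e e' h0 h1 h2 c
  · have hmem := diff_mem_aux d n hdn e' e h0.symm h1.symm h2 c
    have hneg : monomial e c - monomial e' c = -(monomial e' c - monomial e c) := by ring
    rw [hneg]
    exact neg_mem hmem

lemma ker_le (d n : ℕ) (hdn : 0 < d * n) :
    ∀ (N : ℕ) (f : MvPolynomial (Fin 3) ℂ), f.support.card ≤ N → phiKSB d n f = 0 →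
      f ∈ Ideal.span ({X 0 * X 1 - X 2 ^ (d * n)} : Set (MvPolynomial (Fin 3) ℂ)) := by
  intro N
  induction N with
  | zero =>
    intro f hc _
    have : f = 0 := by rwa [Nat.le_zero, Finset.card_eq_zero, support_eq_empty] at hc
    simp [this]
  | succ N ih =>
    intro f hc hphi
    by_cases hf : f = 0
    · simp [hf]
    · obtain ⟨e, he⟩ := support_nonempty.mpr hf
      have hphisum : phiKSB d n f = ∑ b ∈ f.support, monomial (EmKSB d n b) (coeff b f) := by
        conv_lhs => rw [f.as_sum]
        rw [map_sum]
        exact Finset.sum_congr rfl fun b _ => phiKSB_monomial d n b _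
      have hco : ∑ b ∈ f.support, (if EmKSB d n b = EmKSB d n e then coeff b f else 0) = 0 := by
        have h1 : coeff (EmKSB d n e) (phiKSB d n f) = 0 := by rw [hphi]; simp
        rw [hphisum, coeff_sum] at h1
        simpa [coeff_monomial] using h1
      obtain ⟨e', he', hne, hEm⟩ : ∃ e' ∈ f.support, e' ≠ e ∧ EmKSB d n e' = EmKSB d n e := by
        by_contra hcon
        push_neg at hcon
        rw [Finset.sum_eq_single e] at hco
        · rw [if_pos rfl] at hco
          exact (mem_support_iff.mp he) hco
        · intro b hb hbe
          exact if_neg (hcon b hb hbe)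
        · intro h; exact absurd he h
      set c := coeff e f with hcdef
      set g := f - (monomial e c - monomial e' c) with hg
      have hgphi : phiKSB d n g = 0 := by
        rw [hg, map_sub, map_sub, phiKSB_monomial, phiKSB_monomial, hEm]
        rw [sub_self, sub_zero, hphi]
      have hsub : g.support ⊆ f.support.erase e := by
        intro b hb
        rw [Finset.mem_erase]
        have hbco := mem_support_iff.mp hb
        by_cases hbe : b = e
        · exfalso
          apply hbco
          rw [hg, hbe]
          simp [coeff_sub, coeff_monomial, hne, hcdef]
        · refine ⟨hbe, ?_⟩
          by_cases hbe' : b = e'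
          · rw [hbe']; exact he'
          · rw [mem_support_iff]
            intro h0
            apply hbco
            rw [hg]
            simp [coeff_sub, coeff_monomial, Ne.symm hbe, Ne.symm hbe', h0]
      have hcard : g.support.card ≤ N := by
        have hc1 := Finset.card_le_card hsub
        have hc2 := Finset.card_erase_of_mem he
        omega
      have hgI := ih g hcard hgphi
      have hdiff := diff_mem d n hdn e e' hEm.symm c
      have hfeq : f = g + (monomial e c - monomial e' c) := by rw [hg]; ring
      rw [hfeq]
      exact Ideal.add_mem _ hgI hdiff

lemma mem_fixed {A : Type*} [CommSemiring A] [Algebra ℂ A] (φ : A ≃ₐ[ℂ] A) (x : A) :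
    x ∈ fixedSubalgebra φ ↔ φ x = x := Iff.rfl

lemma fixed_pow_eq {A : Type*} [CommSemiring A] [Algebra ℂ A]
    (e : A ≃ₐ[ℂ] A) (N m : ℕ) (h2 : 2 ≤ N) (hN : e ^ N = 1) (hcop : Nat.Coprime m N) :
    fixedSubalgebra e = fixedSubalgebra (e ^ m) := by
  have aux : ∀ (g : A ≃ₐ[ℂ] A) (x : A), g x = x → ∀ k, (g ^ k) x = x := by
    intro g x hx k
    induction k with
    | zero => simp
    | succ k ihk => rw [pow_succ, AlgEquiv.mul_apply, hx, ihk]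
  ext x
  rw [mem_fixed, mem_fixed]
  constructor
  · exact fun hx => aux e x hx m
  · intro hx
    have hNtot : 1 ≤ N.totient := Nat.totient_pos.mpr (by omega)
    have hmod : m ^ N.totient % N = 1 := by
      have hmo := Nat.ModEq.pow_totient hcop
      have h1 : 1 % N = 1 := Nat.mod_eq_of_lt (by omega)
      unfold Nat.ModEq at hmo
      omega
    have hx2 : (e ^ (m ^ N.totient)) x = x := by
      rw [show m ^ N.totient = m * m ^ (N.totient - 1) by
        conv_lhs => rw [show N.totient = 1 + (N.totient - 1) by omega]
        rw [pow_add, pow_one]]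
      rw [pow_mul]
      exact aux (e ^ m) x hx _
    have hdecomp : m ^ N.totient = N * (m ^ N.totient / N) + 1 := by
      have := Nat.div_add_mod (m ^ N.totient) N
      omega
    rw [hdecomp, pow_add, pow_mul, hN, one_pow, pow_one, one_mul] at hx2
    exact hx2

lemma tau_monomial (a d n : ℕ) (ω : ℂ)
    (τ : MvPolynomial (Fin 2) ℂ ≃ₐ[ℂ] MvPolynomial (Fin 2) ℂ)
    (hτs : τ (X 0) = C ω * X 0)
    (hτt : τ (X 1) = C (ω ^ (d * n * a - 1)) * X 1)
    (e : Fin 2 →₀ ℕ) (c : ℂ) :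
    τ (monomial e c) = monomial e (ω ^ (e 0) * ω ^ ((d * n * a - 1) * e 1) * c) := by
  rw [monomial2_eq, monomial2_eq]
  have hC : ∀ z : ℂ, τ (C z) = C z := by
    intro z
    rw [← MvPolynomial.algebraMap_eq]
    exact τ.commutes z
  rw [map_mul, map_mul, map_pow, map_pow, hτs, hτt, hC]
  rw [mul_pow, mul_pow, ← C_pow, ← C_pow, ← pow_mul]
  rw [C_mul, C_mul, C_pow]
  ring

lemma fixed_mem_range (a d n : ℕ) (ha : 0 < a) (hd : 0 < d) (hn : 2 ≤ n) (ω : ℂ)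
    (hω : IsPrimitiveRoot ω (d * n ^ 2))
    (τ : MvPolynomial (Fin 2) ℂ ≃ₐ[ℂ] MvPolynomial (Fin 2) ℂ)
    (hτs : τ (X 0) = C ω * X 0)
    (hτt : τ (X 1) = C (ω ^ (d * n * a - 1)) * X 1)
    (p : MvPolynomial (Fin 2) ℂ) (hp : τ p = p) :
    p ∈ (phiKSB d n).range := by
  have hdn : 0 < d * n := by positivity
  have hdna : 1 ≤ d * n * a := Nat.one_le_iff_ne_zero.mpr (by positivity)
  rw [show p = ∑ e ∈ p.support, monomial e (coeff e p) from p.as_sum]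
  apply Subalgebra.sum_mem
  intro e he
  have hc0 : coeff e p ≠ 0 := mem_support_iff.mp he
  have hcoeff : ω ^ (e 0) * ω ^ ((d * n * a - 1) * e 1) * coeff e p = coeff e p := by
    have h1 : coeff e (τ p) = ω ^ (e 0) * ω ^ ((d * n * a - 1) * e 1) * coeff e p := by
      conv_lhs => rw [show p = ∑ b ∈ p.support, monomial b (coeff b p) from p.as_sum]
      rw [map_sum, coeff_sum, Finset.sum_eq_single e]
      · rw [tau_monomial a d n ω τ hτs hτt, coeff_monomial, if_pos rfl]
      · intro b hb hbe
        rw [tau_monomial a d n ω τ hτs hτt, coeff_monomial, if_neg hbe]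
      · intro habs; exact absurd he habs
    rw [hp] at h1
    exact h1.symm
  have hw : ω ^ (e 0 + (d * n * a - 1) * e 1) = 1 := by
    rw [pow_add]
    exact mul_right_cancel₀ hc0 (hcoeff.trans (one_mul (coeff e p)).symm)
  have hdvd : d * n ^ 2 ∣ e 0 + (d * n * a - 1) * e 1 := (hω.pow_eq_one_iff_dvd _).mp hw
  have hdvd' : (d * n : ℤ) ∣ (e 0 : ℤ) - (e 1 : ℤ) := by
    have h2 : (d * n : ℤ) ∣ (e 0 : ℤ) + ((d * n * a : ℤ) - 1) * (e 1 : ℤ) := by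
      have h3 : ((d * n : ℕ) : ℤ) ∣ ((e 0 + (d * n * a - 1) * e 1 : ℕ) : ℤ) :=
        Int.natCast_dvd_natCast.mpr (dvd_trans ⟨n, by ring⟩ hdvd)
      have h4 : ((e 0 + (d * n * a - 1) * e 1 : ℕ) : ℤ)
          = (e 0 : ℤ) + ((d * n * a : ℤ) - 1) * (e 1 : ℤ) := by
        push_cast [Nat.cast_sub hdna]
        ring
      rw [h4] at h3
      exact_mod_cast h3
    have h3 : (d * n : ℤ) ∣ (d * n * a : ℤ) * (e 1 : ℤ) := ⟨a * e 1, by push_cast; ring⟩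
    have h5 := dvd_sub h2 h3
    have h6 : (e 0 : ℤ) - (e 1 : ℤ) = (e 0 : ℤ) + ((d * n * a : ℤ) - 1) * (e 1 : ℤ) - (d * n * a : ℤ) * (e 1 : ℤ) := by ring
    rw [h6]; exact h5
  rcases le_total (e 1) (e 0) with hle | hle
  · have hdvdN : d * n ∣ e 0 - e 1 := by
      have h6 : ((d * n : ℕ) : ℤ) ∣ ((e 0 - e 1 : ℕ) : ℤ) := by
        rw [Nat.cast_sub hle]; exact_mod_cast hdvd'
      exact_mod_cast h6
    set f : Fin 3 →₀ ℕ := Finsupp.single 0 ((e 0 - e 1) / (d * n)) + Finsupp.single 2 (e 1)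
      with hfdef
    refine (AlgHom.mem_range _).mpr ⟨monomial f (coeff e p), ?_⟩
    rw [phiKSB_monomial]
    have hval0 : f 0 = (e 0 - e 1) / (d * n) := by simp [hfdef, Finsupp.single_apply]
    have hval1 : f 1 = 0 := by simp [hfdef, Finsupp.single_apply]
    have hval2 : f 2 = e 1 := by simp [hfdef, Finsupp.single_apply]
    have hEe : EmKSB d n f = e := by
      ext i
      fin_cases i
      · show EmKSB d n f 0 = e 0
        rw [EmKSB_apply0, hval0, hval2, Nat.mul_div_cancel' hdvdN]
        omega
      · show EmKSB d n f 1 = e 1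
        rw [EmKSB_apply1, hval1, hval2, Nat.mul_zero, Nat.zero_add]
    rw [hEe]
  · have hdvdN : d * n ∣ e 1 - e 0 := by
      have h6 : ((d * n : ℕ) : ℤ) ∣ ((e 1 - e 0 : ℕ) : ℤ) := by
        have h7 := dvd_neg.mpr hdvd'
        rw [neg_sub] at h7
        rw [Nat.cast_sub hle]
        exact_mod_cast h7
      exact_mod_cast h6
    set f : Fin 3 →₀ ℕ := Finsupp.single 1 ((e 1 - e 0) / (d * n)) + Finsupp.single 2 (e 0)
      with hfdef
    refine (AlgHom.mem_range _).mpr ⟨monomial f (coeff e p), ?_⟩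
    rw [phiKSB_monomial]
    have hval0 : f 0 = 0 := by simp [hfdef, Finsupp.single_apply]
    have hval1 : f 1 = (e 1 - e 0) / (d * n) := by simp [hfdef, Finsupp.single_apply]
    have hval2 : f 2 = e 0 := by simp [hfdef, Finsupp.single_apply]
    have hEe : EmKSB d n f = e := by
      ext i
      fin_cases i
      · show EmKSB d n f 0 = e 0
        rw [EmKSB_apply0, hval0, hval2, Nat.mul_zero, Nat.zero_add]
      · show EmKSB d n f 1 = e 1
        rw [EmKSB_apply1, hval1, hval2, Nat.mul_div_cancel' hdvdN]
        omega
    rw [hEe]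

/-- The fixed subalgebra of `ℂ[u,v,y]/(uv − y^{dn})` under
`u ↦ ζu, v ↦ ζ⁻¹v, y ↦ ζᵃy` (`ζ` a primitive `n`-th root of unity) is
isomorphic to the fixed subalgebra of `ℂ[s,t]` under
`s ↦ ωs, t ↦ ω^{dna−1}t` (`ω` a primitive `dn²`-th root of unity): the
central fiber of the KSB family is the cyclic quotient singularity of type
`1/(dn²)(1, dna−1)`. -/
theorem central_fiber_is_cyclic_quotient_singularity
    (a d n : ℕ) (ha : 0 < a) (hd : 0 < d) (hn : 2 ≤ n)
    (hgcd : Nat.gcd a n = 1)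
    (ζ ω : ℂ) (hζ : IsPrimitiveRoot ζ n) (hω : IsPrimitiveRoot ω (d * n ^ 2))
    (σ : CentralFiberAlg d n ≃ₐ[ℂ] CentralFiberAlg d n)
    (hσu : σ (Ideal.Quotient.mk _ (X 0)) = Ideal.Quotient.mk _ (C ζ * X 0))
    (hσv : σ (Ideal.Quotient.mk _ (X 1)) = Ideal.Quotient.mk _ (C ζ⁻¹ * X 1))
    (hσy : σ (Ideal.Quotient.mk _ (X 2)) = Ideal.Quotient.mk _ (C (ζ ^ a) * X 2))
    (τ : MvPolynomial (Fin 2) ℂ ≃ₐ[ℂ] MvPolynomial (Fin 2) ℂ)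
    (hτs : τ (X 0) = C ω * X 0)
    (hτt : τ (X 1) = C (ω ^ (d * n * a - 1)) * X 1) :
    Nonempty ((fixedSubalgebra σ) ≃ₐ[ℂ] (fixedSubalgebra τ)) := by
  classical
  have hdn : 0 < d * n := by positivity
  have hn0 : 0 < n := by omega
  haveI : NeZero n := ⟨by omega⟩
  set I3 : Ideal (MvPolynomial (Fin 3) ℂ) :=
    Ideal.span ({X 0 * X 1 - X 2 ^ (d * n)} : Set (MvPolynomial (Fin 3) ℂ)) with hI3
  -- the lifted map
  have hvan : ∀ g ∈ I3, phiKSB d n g = 0 := by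
    intro g hg
    rw [hI3, Ideal.mem_span_singleton] at hg
    obtain ⟨q, rfl⟩ := hg
    rw [map_mul]
    have h0 : phiKSB d n (X 0 * X 1 - X 2 ^ (d * n)) = 0 := by
      simp only [phiKSB, map_sub, map_mul, map_pow, aeval_X]
      simp only [Matrix.cons_val_zero, Matrix.cons_val_one, Matrix.head_cons,
        Matrix.cons_val_two, Matrix.tail_cons]
      rw [mul_pow]
      ring
    rw [h0, zero_mul]
  set Φ : CentralFiberAlg d n →ₐ[ℂ] MvPolynomial (Fin 2) ℂ :=
    Ideal.Quotient.liftₐ I3 (phiKSB d n) hvan with hΦ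
  have hlift : ∀ g : MvPolynomial (Fin 3) ℂ, Φ (Ideal.Quotient.mk I3 g) = phiKSB d n g := by
    intro g
    rw [hΦ, Ideal.Quotient.liftₐ_apply]
    rfl
  have hinj : Function.Injective Φ := by
    intro x y hxy
    obtain ⟨f, rfl⟩ := Ideal.Quotient.mk_surjective x
    obtain ⟨g, rfl⟩ := Ideal.Quotient.mk_surjective y
    rw [hlift f, hlift g] at hxy
    rw [Ideal.Quotient.eq]
    exact ker_le d n hdn _ (f - g) le_rfl (by rw [map_sub, hxy, sub_self])
  -- algebraMap through the quotient
  have halg : ∀ c : ℂ, (Ideal.Quotient.mk I3 (C c) : CentralFiberAlg d n)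
      = algebraMap ℂ (CentralFiberAlg d n) c := fun c => rfl
  -- σ in algebraMap form
  set u : CentralFiberAlg d n := Ideal.Quotient.mk I3 (X 0) with hu
  set v : CentralFiberAlg d n := Ideal.Quotient.mk I3 (X 1) with hv
  set y : CentralFiberAlg d n := Ideal.Quotient.mk I3 (X 2) with hy
  have hσu' : σ u = algebraMap ℂ _ ζ * u := by rw [hu, hσu, map_mul, halg]
  have hσv' : σ v = algebraMap ℂ _ ζ⁻¹ * v := by rw [hv, hσv, map_mul, halg]
  have hσy' : σ y = algebraMap ℂ _ (ζ ^ a) * y := by rw [hy, hσy, map_mul, halg]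
  -- powers of σ on scaled generators
  have hpow : ∀ (c : ℂ) (x : CentralFiberAlg d n), σ x = algebraMap ℂ _ c * x →
      ∀ k, (σ ^ k) x = algebraMap ℂ _ (c ^ k) * x := by
    intro c x hx k
    induction k with
    | zero => simp
    | succ k ihk =>
      rw [pow_succ, AlgEquiv.mul_apply, hx, map_mul, AlgEquiv.commutes, ihk,
        pow_succ, map_mul]
      ring
  -- σ has order dividing n
  have hσn : σ ^ n = 1 := by
    have hcomp : (((σ ^ n : CentralFiberAlg d n ≃ₐ[ℂ] CentralFiberAlg d n) :
        CentralFiberAlg d n →ₐ[ℂ] CentralFiberAlg d n).comp (Ideal.Quotient.mkₐ ℂ I3))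
        = Ideal.Quotient.mkₐ ℂ I3 := by
      apply MvPolynomial.algHom_ext
      intro i
      fin_cases i
      · show (σ ^ n) (Ideal.Quotient.mkₐ ℂ I3 (X 0)) = Ideal.Quotient.mkₐ ℂ I3 (X 0)
        rw [Ideal.Quotient.mkₐ_eq_mk, ← hu, hpow ζ u hσu' n, hζ.pow_eq_one, map_one, one_mul]
      · show (σ ^ n) (Ideal.Quotient.mkₐ ℂ I3 (X 1)) = Ideal.Quotient.mkₐ ℂ I3 (X 1)
        rw [Ideal.Quotient.mkₐ_eq_mk, ← hv, hpow ζ⁻¹ v hσv' n, inv_pow, hζ.pow_eq_one,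
          inv_one, map_one, one_mul]
      · show (σ ^ n) (Ideal.Quotient.mkₐ ℂ I3 (X 2)) = Ideal.Quotient.mkₐ ℂ I3 (X 2)
        have hsc : (ζ ^ a) ^ n = 1 := by
          rw [← pow_mul, mul_comm, pow_mul, hζ.pow_eq_one, one_pow]
        rw [Ideal.Quotient.mkₐ_eq_mk, ← hy, hpow (ζ ^ a) y hσy' n, hsc, map_one, one_mul]
    apply AlgEquiv.ext
    intro x
    obtain ⟨f, rfl⟩ := Ideal.Quotient.mk_surjective x
    have := AlgHom.congr_fun hcomp f
    simpa [Ideal.Quotient.mkₐ_eq_mk] using this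
  -- ζ' = ω^(dn) is a primitive n-th root; write it as ζ^m
  have hζ' : IsPrimitiveRoot (ω ^ (d * n)) n := hω.pow (by positivity) (by ring)
  obtain ⟨m, hmlt, hm⟩ := hζ.eq_pow_of_pow_eq_one hζ'.pow_eq_one
  have hcop : Nat.Coprime m n := (hζ.pow_iff_coprime hn0 m).mp (hm ▸ hζ')
  set σ' := σ ^ m with hσ'
  have hσ'u : σ' u = algebraMap ℂ _ (ω ^ (d * n)) * u := by
    rw [hσ', hpow ζ u hσu' m, hm]
  have hσ'v : σ' v = algebraMap ℂ _ ((ω ^ (d * n))⁻¹) * v := by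
    rw [hσ', hpow ζ⁻¹ v hσv' m, inv_pow, hm]
  have hσ'y : σ' y = algebraMap ℂ _ ((ω ^ (d * n)) ^ a) * y := by
    have hsc : (ζ ^ a) ^ m = (ω ^ (d * n)) ^ a := by
      rw [← pow_mul, mul_comm, pow_mul, hm]
    rw [hσ', hpow (ζ ^ a) y hσy' m, hsc]
  -- scalar identities
  have hω1 : ω ^ (d * n ^ 2) = 1 := hω.pow_eq_one
  have hsc2 : (ω ^ (d * n))⁻¹ = ω ^ ((d * n * a - 1) * (d * n)) := by
    refine inv_eq_of_mul_eq_one_right ?_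
    rw [← pow_add, show d * n + (d * n * a - 1) * (d * n) = (d * n ^ 2) * (d * a) by
      zify [show 1 ≤ d * n * a from Nat.one_le_iff_ne_zero.mpr (by positivity)]
      ring]
    rw [pow_mul, hω1, one_pow]
  have hsc3 : (ω ^ (d * n)) ^ a = ω ^ (1 + (d * n * a - 1)) := by
    rw [← pow_mul]
    congr 1
    have : 1 ≤ d * n * a := Nat.one_le_iff_ne_zero.mpr (by positivity)
    omega
  -- intertwining Φ ∘ σ' = τ ∘ Φ
  have hcomm : ∀ x : CentralFiberAlg d n, Φ (σ' x) = τ (Φ x) := by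
    have hc : ((Φ.comp (σ' : CentralFiberAlg d n →ₐ[ℂ] CentralFiberAlg d n)).comp
        (Ideal.Quotient.mkₐ ℂ I3))
        = (((τ : MvPolynomial (Fin 2) ℂ →ₐ[ℂ] MvPolynomial (Fin 2) ℂ)).comp Φ).comp
          (Ideal.Quotient.mkₐ ℂ I3) := by
      apply MvPolynomial.algHom_ext
      intro i
      have hΦu : Φ u = X 0 ^ (d * n) := by
        rw [hu, hlift]
        simp [phiKSB]
      have hΦv : Φ v = X 1 ^ (d * n) := by
        rw [hv, hlift]
        simp [phiKSB]
      have hΦy : Φ y = X 0 * X 1 := by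
        rw [hy, hlift]
        simp [phiKSB]
      have hτpow : τ (X 0 ^ (d * n)) = C (ω ^ (d * n)) * X 0 ^ (d * n) := by
        rw [map_pow, hτs, mul_pow, ← C_pow]
      have hτpow2 : τ (X 1 ^ (d * n))
          = C (ω ^ ((d * n * a - 1) * (d * n))) * X 1 ^ (d * n) := by
        rw [map_pow, hτt, mul_pow, ← C_pow, ← pow_mul]
      have hτxy : τ (X 0 * X 1) = C (ω ^ (1 + (d * n * a - 1))) * (X 0 * X 1) := by
        rw [map_mul, hτs, hτt, pow_add, pow_one, C_mul]
        ring
      fin_cases i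
      · show Φ (σ' (Ideal.Quotient.mkₐ ℂ I3 (X 0))) = τ (Φ (Ideal.Quotient.mkₐ ℂ I3 (X 0)))
        rw [Ideal.Quotient.mkₐ_eq_mk, ← hu, hσ'u, map_mul, AlgHom.commutes, hΦu, hτpow,
          MvPolynomial.algebraMap_eq]
      · show Φ (σ' (Ideal.Quotient.mkₐ ℂ I3 (X 1))) = τ (Φ (Ideal.Quotient.mkₐ ℂ I3 (X 1)))
        rw [Ideal.Quotient.mkₐ_eq_mk, ← hv, hσ'v, map_mul, AlgHom.commutes, hΦv, hτpow2,
          MvPolynomial.algebraMap_eq, hsc2]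
      · show Φ (σ' (Ideal.Quotient.mkₐ ℂ I3 (X 2))) = τ (Φ (Ideal.Quotient.mkₐ ℂ I3 (X 2)))
        rw [Ideal.Quotient.mkₐ_eq_mk, ← hy, hσ'y, map_mul, AlgHom.commutes, hΦy, hτxy,
          MvPolynomial.algebraMap_eq, hsc3]
    intro x
    obtain ⟨f, rfl⟩ := Ideal.Quotient.mk_surjective x
    have := AlgHom.congr_fun hc f
    simpa [Ideal.Quotient.mkₐ_eq_mk] using this
  -- fixed subalgebras
  have hfix_eq : fixedSubalgebra σ = fixedSubalgebra σ' := fixed_pow_eq σ n m hn hσn hcop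
  have hmap : Subalgebra.map Φ (fixedSubalgebra σ') = fixedSubalgebra τ := by
    apply le_antisymm
    · rintro p hp
      rw [Subalgebra.mem_map] at hp
      obtain ⟨q, hq, rfl⟩ := hp
      rw [mem_fixed] at hq
      rw [mem_fixed, ← hcomm, hq]
    · intro p hp
      rw [mem_fixed] at hp
      obtain ⟨f, hf⟩ := (AlgHom.mem_range _).mp
        (fixed_mem_range a d n ha hd hn ω hω τ hτs hτt p hp)
      refine Subalgebra.mem_map.mpr ⟨Ideal.Quotient.mk I3 f, ?_, by rw [hlift]; exact hf⟩
      rw [mem_fixed]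
      apply hinj
      rw [hcomm, hlift, hf, hp]
  exact ⟨(Subalgebra.equivOfEq _ _ hfix_eq).trans
    ((Subalgebra.equivMapOfInjective _ Φ hinj).trans (Subalgebra.equivOfEq _ _ hmap))⟩
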